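/- Let d ≥ 16 and λ ∈ ℕ. The singular series 𝔖_d(λ) := ∑_{q=1}^∞ ∑_{1≤p≤q, gcd(p,q)=1} e^{−2πiλp/q} G(p/q;0), where G(p/q;0) = q^{−d} ∑_{n ∈ {1,...,q}^d} e^{2πi|n|²p/q}, converges absolutely and satisfies 1/2 ≤ 𝔖_d(λ) ≤ 3/2. -/

import Mathlib

/-- The `q`-th term of the singular series `𝔖_d(λ)`:
`∑_{1 ≤ p ≤ q, gcd(p,q)=1} e^{−2πiλp/q} G(p/q; 0)`, where
`G(p/q;0) = q^{−d} ∑_{n ∈ {1,…,q}^d} e^{2πi|n|²p/q}`. -/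
noncomputable def singularSeriesTerm (d lam q : ℕ) : ℂ :=
  ∑ p ∈ (Finset.Icc 1 q).filter (fun p => Nat.gcd p q = 1),
    Complex.exp ((-2) * Real.pi * Complex.I * (lam : ℂ) * (p : ℂ) / (q : ℂ)) *
      ((q : ℂ) ^ (-(d : ℤ)) *
        ∑ n ∈ Fintype.piFinset (fun _ : Fin d => Finset.Icc (1 : ℤ) (q : ℤ)),
          Complex.exp (2 * Real.pi * Complex.I * (∑ j, (n j : ℂ) ^ 2) * (p : ℂ) / (q : ℂ)))


open Complex Finset

noncomputable section SingularAux

/-- periodicity of `exp(2πi a / q)` in `a` mod `q`. -/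
lemma exp_int_congr {q : ℕ} (hq : q ≠ 0) {a b : ℤ} (h : (q : ℤ) ∣ a - b) :
    Complex.exp (2 * Real.pi * I * a / q) = Complex.exp (2 * Real.pi * I * b / q) := by
  obtain ⟨k, hk⟩ := h
  have hq' : (q : ℂ) ≠ 0 := Nat.cast_ne_zero.mpr hq
  have ha : (a : ℂ) = b + q * k := by
    have : (a : ℤ) = b + q * k := by linarith
    exact_mod_cast congrArg (Int.cast : ℤ → ℂ) this
  rw [ha]
  rw [show 2 * Real.pi * I * ((b : ℂ) + q * k) / q
      = 2 * Real.pi * I * b / q + k * (2 * Real.pi * I) by field_simp]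
  rw [Complex.exp_add, Complex.exp_int_mul_two_pi_mul_I, mul_one]

lemma zeta_pow (q : ℕ) (hq : q ≠ 0) : Complex.exp (2 * Real.pi * I / q) ^ q = 1 :=
  (Complex.isPrimitiveRoot_exp q hq).pow_eq_one

/-- The standard additive character of `ZMod q` into `ℂ`. -/
def stdChar (q : ℕ) [NeZero q] : AddChar (ZMod q) ℂ :=
  AddChar.zmodChar q (zeta_pow q (NeZero.ne q))

lemma stdChar_prim (q : ℕ) [NeZero q] : (stdChar q).IsPrimitive :=
  AddChar.zmodChar_primitive_of_primitive_root q (Complex.isPrimitiveRoot_exp q (NeZero.ne q))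

lemma stdChar_apply (q : ℕ) [NeZero q] (a : ZMod q) :
    stdChar q a = Complex.exp (2 * Real.pi * I * (ZMod.val a : ℤ) / q) := by
  rw [stdChar, AddChar.zmodChar_apply, ← Complex.exp_nat_mul]
  congr 1
  push_cast
  ring

/-- the exponential at an integer `a` equals the character at its reduction. -/
lemma exp_eq_stdChar (q : ℕ) [NeZero q] (a : ℤ) :
    Complex.exp (2 * Real.pi * I * a / q) = stdChar q ((a : ZMod q)) := by
  rw [stdChar_apply q]
  refine exp_int_congr (NeZero.ne q) ?_
  have : ((a - (ZMod.val (a : ZMod q) : ℤ) : ℤ) : ZMod q) = 0 := by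
    push_cast
    simp [ZMod.natCast_val, ZMod.intCast_zmod_cast]
  exact (ZMod.intCast_zmod_eq_zero_iff_dvd _ _).mp this

/-- Conversion of a sum over `Icc 1 q` to a sum over `ZMod q`. -/
lemma sum_Icc_eq_sum_zmod (q : ℕ) (hq : q ≠ 0) (f : ZMod q → ℂ) :
    haveI : NeZero q := ⟨hq⟩
    ∑ n ∈ Finset.Icc (1 : ℤ) (q : ℤ), f ((n : ZMod q)) = ∑ x : ZMod q, f x := by
  haveI : NeZero q := ⟨hq⟩
  refine Finset.sum_nbij' (fun n => ((n : ZMod q))) (fun x => if x = 0 then (q : ℤ) else (ZMod.val x : ℤ)) ?_ ?_ ?_ ?_ ?_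
  · intro n _; exact Finset.mem_univ _
  · intro x _
    by_cases h : x = 0
    · simp only [h, if_pos rfl, Finset.mem_Icc]
      exact ⟨by exact_mod_cast Nat.one_le_iff_ne_zero.mpr hq, le_refl _⟩
    · simp only [if_neg h, Finset.mem_Icc]
      constructor
      · exact_mod_cast Nat.one_le_iff_ne_zero.mpr (fun h0 => h (by
          rwa [← ZMod.val_eq_zero]))
      · exact_mod_cast le_of_lt (ZMod.val_lt x)
  · intro n hn
    rw [Finset.mem_Icc] at hn
    by_cases h : (n : ZMod q) = 0
    · rw [if_pos h]
      have hd : (q : ℤ) ∣ n := (ZMod.intCast_zmod_eq_zero_iff_dvd _ _).mp h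
      obtain ⟨k, hk⟩ := hd
      have hq1 : (1 : ℤ) ≤ q := by exact_mod_cast Nat.one_le_iff_ne_zero.mpr hq
      have : k = 1 := by nlinarith [hn.1, hn.2]
      rw [hk, this, mul_one]
    · rw [if_neg h]
      have hlt : n < (q : ℤ) := lt_of_le_of_ne hn.2 (fun he => h (by rw [he]; exact_mod_cast ZMod.natCast_self q))
      have h0 : (0 : ℤ) ≤ n := le_trans one_pos.le hn.1
      have hv : ((n : ZMod q).val : ℤ) = n % q := by
        exact_mod_cast ZMod.val_intCast n
      rw [hv, Int.emod_eq_of_lt h0 hlt]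
  · intro x _
    by_cases h : x = 0
    · simp [h]
    · simp only [if_neg h]
      simp [ZMod.intCast_cast]
  · intro n _; rfl

/-- The quadratic Gauss sum bound over `ZMod q`. -/
lemma gauss_sq_le (q : ℕ) [NeZero q] (p : ℕ) (hp : Nat.gcd p q = 1) :
    ‖∑ x : ZMod q, stdChar q ((p : ZMod q) * x ^ 2)‖ ^ 2 ≤ 2 * q := by
  have hq : q ≠ 0 := NeZero.ne q
  set ψ := stdChar q with hψ
  set S := ∑ x : ZMod q, ψ ((p : ZMod q) * x ^ 2) with hS
  have hR : 0 < ringChar (ZMod q) := by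
    rw [ZMod.ringChar_zmod_n]; exact Nat.pos_of_ne_zero hq
  have hconj : ∀ a : ZMod q, (starRingEnd ℂ) (ψ a) = ψ (-a) := by
    intro a
    rw [AddChar.starComp_apply hR, AddChar.inv_apply]
  have habs : ∀ a : ZMod q, ‖ψ a‖ = 1 := by
    intro a
    rw [hψ, stdChar, AddChar.zmodChar_apply, norm_pow]
    have hz : (2 * (Real.pi:ℂ) * I / (q:ℂ)) = ((2 * Real.pi / q : ℝ) : ℂ) * I := by
      push_cast; ring
    rw [hz, Complex.norm_exp_ofReal_mul_I, one_pow]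
  set T : Finset (ZMod q) := univ.filter (fun h : ZMod q => 2 * h = 0) with hT
  have hTcard : T.card ≤ 2 := by
    have : T.card ≤ ({0, q} : Finset ℕ).card := by
      apply Finset.card_le_card_of_injOn (fun h => 2 * (ZMod.val h))
      · intro h hh
        rw [hT, Finset.mem_coe, Finset.mem_filter] at hh
        have hdvd : q ∣ 2 * ZMod.val h := by
          apply (ZMod.natCast_eq_zero_iff _ _).mp
          push_cast
          rw [ZMod.natCast_val, ZMod.cast_id]
          exact hh.2
        have hlt : 2 * ZMod.val h < 2 * q := by
          have := ZMod.val_lt h; omega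
        have hq0 : 0 < q := Nat.pos_of_ne_zero hq
        obtain ⟨k, hk⟩ := hdvd
        have hk2 : k < 2 := by nlinarith
        have : 2 * ZMod.val h = 0 ∨ 2 * ZMod.val h = q := by
          interval_cases k <;> omega
        simp only [Finset.mem_coe, Finset.mem_insert, Finset.mem_singleton]
        tauto
      · intro a _ b _ hab
        simp only at hab
        exact ZMod.val_injective _ (by omega)
    calc T.card ≤ ({0, q} : Finset ℕ).card := this
      _ ≤ 2 := Finset.card_insert_le _ _ |>.trans (by simp)
  have key : S * (starRingEnd ℂ) S = (q : ℂ) * ∑ h ∈ T, ψ ((p : ZMod q) * h ^ 2) := by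
    rw [hS, map_sum]
    simp_rw [hconj]
    rw [Finset.sum_mul_sum]
    have step1 : ∀ y : ZMod q, ∑ x : ZMod q, ψ ((p : ZMod q) * x ^ 2) * ψ (-((p:ZMod q) * y ^ 2))
        = ∑ h : ZMod q, ψ ((p : ZMod q) * h ^ 2 + y * (2 * (p : ZMod q) * h)) := by
      intro y
      rw [← Equiv.sum_comp (Equiv.addLeft y)]
      apply Finset.sum_congr rfl
      intro h _
      rw [← AddChar.map_add_eq_mul]
      congr 1
      simp only [Equiv.coe_addLeft]
      ring
    calc ∑ x : ZMod q, ∑ y : ZMod q, ψ ((p:ZMod q) * x ^ 2) * ψ (-((p:ZMod q) * y ^ 2))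
        = ∑ y : ZMod q, ∑ x : ZMod q, ψ ((p:ZMod q) * x ^ 2) * ψ (-((p:ZMod q) * y ^ 2)) :=
          Finset.sum_comm
      _ = ∑ y : ZMod q, ∑ h : ZMod q, ψ ((p:ZMod q) * h ^ 2 + y * (2 * (p:ZMod q) * h)) := by
          exact Finset.sum_congr rfl (fun y _ => step1 y)
      _ = ∑ h : ZMod q, ∑ y : ZMod q, ψ ((p:ZMod q) * h ^ 2) * ψ (y * (2 * (p:ZMod q) * h)) := by
          rw [Finset.sum_comm]
          exact Finset.sum_congr rfl (fun h _ => Finset.sum_congr rfl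
            (fun y _ => (AddChar.map_add_eq_mul ψ _ _)))
      _ = ∑ h : ZMod q, ψ ((p:ZMod q) * h ^ 2) *
            ((if 2 * (p:ZMod q) * h = 0 then (Fintype.card (ZMod q) : ℕ) else 0 : ℕ) : ℂ) := by
          apply Finset.sum_congr rfl
          intro h _
          rw [← Finset.mul_sum, AddChar.sum_mulShift _ (stdChar_prim q)]
      _ = (q : ℂ) * ∑ h ∈ T, ψ ((p:ZMod q) * h ^ 2) := by
          have hu : IsUnit (p : ZMod q) := by
            rw [ZMod.isUnit_iff_coprime]; exact hp
          have hcond : ∀ h : ZMod q, (2 * (p:ZMod q) * h = 0) ↔ (2 * h = 0) := by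
            intro h
            constructor
            · intro h0
              have : (p : ZMod q) * (2 * h) = 0 := by rw [← h0]; ring
              exact (hu.mul_right_eq_zero).mp this
            · intro h0
              calc 2 * (p:ZMod q) * h = (p:ZMod q) * (2 * h) := by ring
                _ = 0 := by rw [h0, mul_zero]
          simp_rw [hcond]
          rw [hT, Finset.mul_sum, Finset.sum_filter]
          apply Finset.sum_congr rfl
          intro h _
          push_cast [apply_ite (fun n : ℕ => (n : ℂ))]
          split_ifs with h0
          · rw [ZMod.card]; ring
          · simp
  have hnormsq : (‖S‖ ^ 2 : ℝ) = ‖S * (starRingEnd ℂ) S‖ := by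
    rw [Complex.mul_conj, Complex.norm_real,
      Real.norm_of_nonneg (Complex.normSq_nonneg S), ← Complex.sq_norm]
  rw [hnormsq, key]
  calc ‖(q : ℂ) * ∑ h ∈ T, ψ ((p:ZMod q) * h ^ 2)‖
      ≤ (q : ℝ) * ∑ h ∈ T, ‖ψ ((p:ZMod q) * h ^ 2)‖ := by
        rw [norm_mul, Complex.norm_natCast]
        gcongr
        exact (norm_sum_le _ _)
    _ = (q : ℝ) * T.card := by
        rw [Finset.sum_congr rfl (fun h _ => habs _), Finset.sum_const, nsmul_eq_mul, mul_one]
    _ ≤ (q : ℝ) * 2 := by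
        gcongr
        exact_mod_cast hTcard
    _ = 2 * q := by ring

/-- The one-dimensional Gauss sum over `Icc 1 q`, bounded by `√(2q)`. -/
lemma icc_gauss_le (q : ℕ) [NeZero q] (p : ℕ) (hp : Nat.gcd p q = 1) :
    ‖∑ n ∈ Finset.Icc (1 : ℤ) (q : ℤ),
        Complex.exp (2 * Real.pi * I * (n : ℂ) ^ 2 * (p : ℂ) / (q : ℂ))‖
      ≤ Real.sqrt (2 * q) := by
  have hq : q ≠ 0 := NeZero.ne q
  have heq : ∑ n ∈ Finset.Icc (1 : ℤ) (q : ℤ),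
        Complex.exp (2 * Real.pi * I * (n : ℂ) ^ 2 * (p : ℂ) / (q : ℂ))
      = ∑ x : ZMod q, stdChar q ((p : ZMod q) * x ^ 2) := by
    rw [← sum_Icc_eq_sum_zmod q hq (fun x => stdChar q ((p : ZMod q) * x ^ 2))]
    apply Finset.sum_congr rfl
    intro n _
    have h1 : Complex.exp (2 * Real.pi * I * (n : ℂ) ^ 2 * (p : ℂ) / (q : ℂ))
        = Complex.exp (2 * Real.pi * I * ((n ^ 2 * p : ℤ) : ℂ) / q) := by
      congr 1
      push_cast
      ring
    rw [h1, exp_eq_stdChar q]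
    congr 1
    push_cast
    ring
  rw [heq]
  have h2 := gauss_sq_le q p hp
  have h3 : (0:ℝ) ≤ ‖∑ x : ZMod q, stdChar q ((p : ZMod q) * x ^ 2)‖ := norm_nonneg _
  nlinarith [Real.sq_sqrt (by positivity : (0:ℝ) ≤ 2 * (q:ℝ)),
    Real.sqrt_nonneg (2 * (q:ℝ))]

/-- The inner sum over the box factors as a `d`-th power. -/
lemma box_sum_eq_pow (d q : ℕ) (p : ℕ) :
    ∑ n ∈ Fintype.piFinset (fun _ : Fin d => Finset.Icc (1 : ℤ) (q : ℤ)),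
        Complex.exp (2 * Real.pi * I * (∑ j, (n j : ℂ) ^ 2) * (p : ℂ) / (q : ℂ))
      = (∑ m ∈ Finset.Icc (1 : ℤ) (q : ℤ),
          Complex.exp (2 * Real.pi * I * (m : ℂ) ^ 2 * (p : ℂ) / (q : ℂ))) ^ d := by
  have h1 : ∀ n : Fin d → ℤ,
      Complex.exp (2 * Real.pi * I * (∑ j, (n j : ℂ) ^ 2) * (p : ℂ) / (q : ℂ))
        = ∏ j : Fin d, Complex.exp (2 * Real.pi * I * (n j : ℂ) ^ 2 * (p : ℂ) / (q : ℂ)) := by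
    intro n
    rw [← Complex.exp_sum]
    congr 1
    rw [← Finset.sum_div, ← Finset.sum_mul, Finset.mul_sum]
  calc ∑ n ∈ Fintype.piFinset (fun _ : Fin d => Finset.Icc (1 : ℤ) (q : ℤ)),
        Complex.exp (2 * Real.pi * I * (∑ j, (n j : ℂ) ^ 2) * (p : ℂ) / (q : ℂ))
      = ∑ n ∈ Fintype.piFinset (fun _ : Fin d => Finset.Icc (1 : ℤ) (q : ℤ)),
        ∏ j : Fin d, Complex.exp (2 * Real.pi * I * (n j : ℂ) ^ 2 * (p : ℂ) / (q : ℂ)) :=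
        Finset.sum_congr rfl (fun n _ => h1 n)
    _ = ∏ _j : Fin d, ∑ m ∈ Finset.Icc (1 : ℤ) (q : ℤ),
          Complex.exp (2 * Real.pi * I * (m : ℂ) ^ 2 * (p : ℂ) / (q : ℂ)) :=
        (Finset.prod_univ_sum (fun _ : Fin d => Finset.Icc (1 : ℤ) (q : ℤ))
          (fun _ m => Complex.exp (2 * Real.pi * I * (m : ℂ) ^ 2 * (p : ℂ) / (q : ℂ)))).symm
    _ = _ := by rw [Finset.prod_const, Finset.card_univ, Fintype.card_fin]

end SingularAux


open Complex Finset in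
lemma singularSeriesTerm_zero (d lam : ℕ) : singularSeriesTerm d lam 0 = 0 := by
  simp [singularSeriesTerm]

open Complex Finset in
lemma singularSeriesTerm_one (d lam : ℕ) : singularSeriesTerm d lam 1 = 1 := by
  rw [singularSeriesTerm]
  rw [show (Finset.Icc 1 1).filter (fun p => Nat.gcd p 1 = 1) = {1} by decide]
  rw [Finset.sum_singleton]
  have h1 : Complex.exp ((-2) * Real.pi * Complex.I * (lam : ℂ) * (((1:ℕ)) : ℂ) / (((1:ℕ)) : ℂ)) = 1 := by
    rw [show ((-2) * Real.pi * Complex.I * (lam : ℂ) * (((1:ℕ)) : ℂ) / (((1:ℕ)) : ℂ))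
        = ((-lam : ℤ) : ℂ) * (2 * Real.pi * Complex.I) by push_cast; ring]
    exact Complex.exp_int_mul_two_pi_mul_I _
  have h2 : ∑ n ∈ Fintype.piFinset (fun _ : Fin d => Finset.Icc (1 : ℤ) ((1:ℕ) : ℤ)),
      Complex.exp (2 * Real.pi * Complex.I * (∑ j, (n j : ℂ) ^ 2) * ((1:ℕ) : ℂ) / ((1:ℕ) : ℂ))
      = 1 := by
    have : ∀ n ∈ Fintype.piFinset (fun _ : Fin d => Finset.Icc (1 : ℤ) ((1:ℕ) : ℤ)),
        Complex.exp (2 * Real.pi * Complex.I * (∑ j, (n j : ℂ) ^ 2) * ((1:ℕ) : ℂ) / ((1:ℕ) : ℂ)) = 1 := by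
      intro n hn
      rw [Fintype.mem_piFinset] at hn
      have hn1 : ∀ j, n j = 1 := by
        intro j
        have := hn j
        rw [Finset.mem_Icc] at this
        omega
      have : (∑ j, ((n j : ℂ)) ^ 2) = (d : ℂ) := by
        rw [Finset.sum_congr rfl (fun j (_ : j ∈ Finset.univ) => by rw [hn1 j] : ∀ j ∈ Finset.univ, ((n j : ℂ))^2 = ((1:ℤ):ℂ)^2)]
        simp
      rw [this, show (2 * Real.pi * Complex.I * (d : ℂ) * ((1:ℕ) : ℂ) / ((1:ℕ) : ℂ))
          = ((d : ℤ) : ℂ) * (2 * Real.pi * Complex.I) by push_cast; ring]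
      exact Complex.exp_int_mul_two_pi_mul_I _
    rw [Finset.sum_congr rfl this, Finset.sum_const, Fintype.card_piFinset]
    simp
  rw [h1, h2]
  norm_num

open Complex Finset in
lemma singularSeriesTerm_two (d lam : ℕ) (hd : 1 ≤ d) : singularSeriesTerm d lam 2 = 0 := by
  rw [singularSeriesTerm]
  rw [show (Finset.Icc 1 2).filter (fun p => Nat.gcd p 2 = 1) = {1} by decide]
  rw [Finset.sum_singleton]
  rw [box_sum_eq_pow d 2 1]
  have h2 : ∑ m ∈ Finset.Icc (1 : ℤ) ((2:ℕ) : ℤ),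
      Complex.exp (2 * Real.pi * I * (m : ℂ) ^ 2 * ((1:ℕ) : ℂ) / ((2:ℕ) : ℂ)) = 0 := by
    rw [show Finset.Icc (1 : ℤ) ((2:ℕ) : ℤ) = {1, 2} by decide]
    rw [Finset.sum_insert (by decide), Finset.sum_singleton]
    have e1 : Complex.exp (2 * Real.pi * I * ((1:ℤ) : ℂ) ^ 2 * ((1:ℕ) : ℂ) / ((2:ℕ) : ℂ))
        = Complex.exp (Real.pi * I) := by
      congr 1
      push_cast
      ring
    have e2 : Complex.exp (2 * Real.pi * I * ((2:ℤ) : ℂ) ^ 2 * ((1:ℕ) : ℂ) / ((2:ℕ) : ℂ)) = 1 := by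
      rw [show (2 * Real.pi * I * ((2:ℤ) : ℂ) ^ 2 * ((1:ℕ) : ℂ) / ((2:ℕ) : ℂ))
          = ((2 : ℤ) : ℂ) * (2 * Real.pi * I) by push_cast; ring]
      exact Complex.exp_int_mul_two_pi_mul_I _
    rw [e1, e2, Complex.exp_pi_mul_I]
    ring
  rw [h2, zero_pow (by omega)]
  ring

open Complex Finset in
lemma singularSeriesTerm_norm_le (d lam q : ℕ) (hd : 16 ≤ d) (hq : 3 ≤ q) :
    ‖singularSeriesTerm d lam q‖ ≤ 256 / (q : ℝ) ^ 7 := by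
  haveI : NeZero q := ⟨by omega⟩
  have hq0 : (0:ℝ) < q := by positivity
  have step1 : ‖singularSeriesTerm d lam q‖
      ≤ (q : ℝ) * ((q : ℝ) ^ (-(d:ℤ)) * Real.sqrt (2 * q) ^ d) := by
    rw [singularSeriesTerm]
    calc ‖∑ p ∈ (Finset.Icc 1 q).filter (fun p => Nat.gcd p q = 1), _‖
        ≤ ∑ p ∈ (Finset.Icc 1 q).filter (fun p => Nat.gcd p q = 1),
          ‖Complex.exp ((-2) * Real.pi * Complex.I * (lam : ℂ) * (p : ℂ) / (q : ℂ)) *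
            ((q : ℂ) ^ (-(d : ℤ)) *
              ∑ n ∈ Fintype.piFinset (fun _ : Fin d => Finset.Icc (1 : ℤ) (q : ℤ)),
                Complex.exp (2 * Real.pi * Complex.I * (∑ j, (n j : ℂ) ^ 2) * (p : ℂ) / (q : ℂ)))‖
          := norm_sum_le _ _
      _ ≤ ∑ p ∈ (Finset.Icc 1 q).filter (fun p => Nat.gcd p q = 1),
            ((q : ℝ) ^ (-(d:ℤ)) * Real.sqrt (2 * q) ^ d) := by
          apply Finset.sum_le_sum
          intro p hp
          rw [Finset.mem_filter] at hp
          rw [norm_mul, norm_mul]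
          have e1 : ‖Complex.exp ((-2) * Real.pi * Complex.I * (lam : ℂ) * (p : ℂ) / (q : ℂ))‖ = 1 := by
            rw [show ((-2) * Real.pi * Complex.I * (lam : ℂ) * (p : ℂ) / (q : ℂ))
                = (((-2) * Real.pi * lam * p / q : ℝ) : ℂ) * Complex.I by push_cast; ring]
            exact Complex.norm_exp_ofReal_mul_I _
          have e2 : ‖(q : ℂ) ^ (-(d : ℤ))‖ = (q : ℝ) ^ (-(d:ℤ)) := by
            rw [norm_zpow]
            norm_num
          have e3 : ‖∑ n ∈ Fintype.piFinset (fun _ : Fin d => Finset.Icc (1 : ℤ) (q : ℤ)),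
              Complex.exp (2 * Real.pi * Complex.I * (∑ j, (n j : ℂ) ^ 2) * (p : ℂ) / (q : ℂ))‖
              ≤ Real.sqrt (2 * q) ^ d := by
            rw [box_sum_eq_pow d q p, norm_pow]
            exact pow_le_pow_left₀ (norm_nonneg _) (icc_gauss_le q p hp.2) d
          rw [e1, e2, one_mul]
          have h1 : (0:ℝ) ≤ (q : ℝ) ^ (-(d:ℤ)) := by positivity
          exact mul_le_mul_of_nonneg_left e3 h1
      _ ≤ (q : ℝ) * ((q : ℝ) ^ (-(d:ℤ)) * Real.sqrt (2 * q) ^ d) := by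
          rw [Finset.sum_const, nsmul_eq_mul]
          apply mul_le_mul_of_nonneg_right _ (by positivity)
          calc (((Finset.Icc 1 q).filter (fun p => Nat.gcd p q = 1)).card : ℝ)
              ≤ ((Finset.Icc 1 q).card : ℝ) := by
                exact_mod_cast Finset.card_le_card (Finset.filter_subset _ _)
            _ = (q : ℝ) := by rw [Nat.card_Icc]; norm_num
  refine step1.trans ?_
  -- now the purely real estimate
  have hr : Real.sqrt (2 * q) / q = Real.sqrt (2 / q) := by
    rw [show (2:ℝ) / q = (2 * q) / (q^2) by field_simp,
      Real.sqrt_div (by positivity), Real.sqrt_sq hq0.le]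
  have hle1 : Real.sqrt (2 / (q:ℝ)) ≤ 1 := by
    rw [show (1:ℝ) = Real.sqrt 1 by rw [Real.sqrt_one]]
    apply Real.sqrt_le_sqrt
    rw [div_le_one hq0]
    linarith [show (3:ℝ) ≤ q by exact_mod_cast hq]
  have key : (q : ℝ) ^ (-(d:ℤ)) * Real.sqrt (2 * q) ^ d = Real.sqrt (2 / q) ^ d := by
    rw [← hr, div_pow, zpow_neg, zpow_natCast]
    field_simp
  rw [key]
  have hd16 : Real.sqrt (2 / (q:ℝ)) ^ d ≤ Real.sqrt (2 / (q:ℝ)) ^ 16 :=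
    pow_le_pow_of_le_one (Real.sqrt_nonneg _) hle1 hd
  have h16 : Real.sqrt (2 / (q:ℝ)) ^ 16 = (2 / (q:ℝ)) ^ 8 := by
    rw [show (16 : ℕ) = 2 * 8 by norm_num, pow_mul, Real.sq_sqrt (by positivity)]
  calc (q : ℝ) * Real.sqrt (2 / q) ^ d ≤ (q : ℝ) * (2 / (q:ℝ)) ^ 8 := by
        rw [← h16]
        exact mul_le_mul_of_nonneg_left hd16 hq0.le
    _ = 256 / (q : ℝ) ^ 7 := by
        field_simp
        ring

/-- The numeric tail estimate. -/
lemma tail_sum_le (N : ℕ) : ∑ i ∈ Finset.range N, 256 / ((i:ℝ) + 3) ^ 7 ≤ 384 / 2187 := by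
  have key : ∀ i : ℕ, 256 / (((i:ℝ)+1) + 3) ^ 7
      ≤ (256/6) / ((i:ℝ) + 3) ^ 6 - (256/6) / (((i:ℝ)+1) + 3) ^ 6 := by
    intro i
    set x : ℝ := (i:ℝ) + 3 with hx
    have hx3 : (3:ℝ) ≤ x := by
      rw [hx]
      have : (0:ℝ) ≤ (i:ℝ) := Nat.cast_nonneg i
      linarith
    have hx0 : (0:ℝ) < x := by linarith
    have hx10 : (0:ℝ) < x + 1 := by linarith
    have hkey : 6 * x^6 ≤ ((x+1)^6 - x^6) * (x+1) := by nlinarith [pow_pos hx0 5, pow_pos hx0 4, pow_pos hx0 3, sq_nonneg x]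
    have e1 : (256/6) / x^6 - (256/6) / (x+1)^6 = (256/6) * (((x+1)^6 - x^6) / (x^6 * (x+1)^6)) := by
      field_simp
    rw [show ((i:ℝ)+1) + 3 = x + 1 by rw [hx]; ring, e1, mul_div_assoc']
    rw [div_le_div_iff₀ (by positivity) (by positivity)]
    calc 256 * (x^6*(x+1)^6) = (256/6) * (6*x^6*(x+1)^6) := by ring
      _ ≤ (256/6) * (((x+1)^6 - x^6)*(x+1)*(x+1)^6) := by
          have h2 := mul_le_mul_of_nonneg_right hkey (le_of_lt (pow_pos hx10 6))
          apply mul_le_mul_of_nonneg_left _ (by norm_num)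
          nlinarith [h2]
      _ = 256/6*((x+1)^6 - x^6)*(x+1)^7 := by ring
  match N with
  | 0 => norm_num
  | (M+1) =>
    rw [Finset.sum_range_succ']
    have t1 : ∑ i ∈ Finset.range M, 256 / (((i:ℝ)+1) + 3) ^ 7
        ≤ (256/6) / ((0:ℝ) + 3) ^ 6 := by
      calc ∑ i ∈ Finset.range M, 256 / (((i:ℝ)+1) + 3) ^ 7
          ≤ ∑ i ∈ Finset.range M,
            ((256/6) / ((i:ℝ) + 3) ^ 6 - (256/6) / (((i:ℝ)+1) + 3) ^ 6) :=
            Finset.sum_le_sum (fun i _ => key i)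
        _ = (256/6) / ((0:ℝ) + 3) ^ 6 - (256/6) / ((M:ℝ) + 3) ^ 6 := by
            have := Finset.sum_range_sub' (fun i => (256/6) / ((i:ℝ) + 3) ^ 6) M
            push_cast at this ⊢
            convert this using 2 <;> push_cast <;> ring_nf
        _ ≤ (256/6) / ((0:ℝ) + 3) ^ 6 := by
            have : (0:ℝ) ≤ (256/6) / ((M:ℝ) + 3) ^ 6 := by positivity
            linarith
    push_cast
    norm_num at t1 ⊢
    linarith

/-- For `d ≥ 16` and `λ ≥ 1` the singular series `𝔖_d(λ)` converges absolutely and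
satisfies `1/2 ≤ 𝔖_d(λ) ≤ 3/2`, i.e. `|𝔖_d(λ) − 1| ≤ 1/2`. -/
theorem singular_series_bounds (d lam : ℕ) (hd : 16 ≤ d) (hlam : 1 ≤ lam) :
    Summable (fun q : ℕ => ‖singularSeriesTerm d lam q‖) ∧
      ‖(∑' q : ℕ, singularSeriesTerm d lam q) - 1‖ ≤ 1 / 2 := by
  have hd1 : 1 ≤ d := by omega
  have hbound : ∀ n : ℕ, ‖singularSeriesTerm d lam (n+3)‖ ≤ 256 / ((n:ℝ)+3)^7 := by
    intro n
    have h := singularSeriesTerm_norm_le d lam (n+3) hd (by omega)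
    have hc : (((n+3 : ℕ)):ℝ) = (n:ℝ)+3 := by push_cast; ring
    rwa [hc] at h
  have hg : Summable (fun n : ℕ => 256 / ((n:ℝ)+3)^7) := by
    have h1 : Summable (fun n : ℕ => 1/((n:ℝ))^7) :=
      (Real.summable_one_div_nat_pow).mpr (by norm_num)
    have h2 : Summable (fun n : ℕ => 1/(((n+3 : ℕ)):ℝ)^7) :=
      ((summable_nat_add_iff (f := fun n : ℕ => 1/((n:ℝ))^7) 3).mpr h1)
    apply (h2.mul_left 256).congr
    intro n
    push_cast
    ring
  have hS3 : Summable (fun n => ‖singularSeriesTerm d lam (n+3)‖) :=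
    Summable.of_nonneg_of_le (fun n => norm_nonneg _) hbound hg
  have hsum : Summable (fun q => ‖singularSeriesTerm d lam q‖) :=
    ((summable_nat_add_iff (f := fun q : ℕ => ‖singularSeriesTerm d lam q‖) 3).mp hS3)
  refine ⟨hsum, ?_⟩
  have hsum' : Summable (fun q => singularSeriesTerm d lam q) := hsum.of_norm
  have hsplit := (Summable.sum_add_tsum_nat_add 3 hsum').symm
  have hfirst : ∑ i ∈ Finset.range 3, singularSeriesTerm d lam i = 1 := by
    rw [Finset.sum_range_succ, Finset.sum_range_succ, Finset.sum_range_one,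
      singularSeriesTerm_zero, singularSeriesTerm_one, singularSeriesTerm_two d lam hd1]
    ring
  rw [hsplit, hfirst]
  have hone : (1 : ℂ) + (∑' n, singularSeriesTerm d lam (n+3)) - 1
      = ∑' n, singularSeriesTerm d lam (n+3) := by ring
  rw [hone]
  calc ‖∑' n, singularSeriesTerm d lam (n+3)‖
      ≤ ∑' n, ‖singularSeriesTerm d lam (n+3)‖ := norm_tsum_le_tsum_norm hS3
    _ ≤ ∑' n : ℕ, 256/((n:ℝ)+3)^7 := Summable.tsum_le_tsum hbound hS3 hg
    _ ≤ 384/2187 := Real.tsum_le_of_sum_range_le (fun n => by positivity) tail_sum_le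
    _ ≤ 1/2 := by norm_num
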